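/- For all n ≥ 3, φ(n) ≥ (1/3)·2^(2^n). -/

import Mathlib

/-- `F n = (a n ·, b n ·, φ n)` from the recursive construction;
    `φ 1 := 1` by convention. -/
def F : ℕ → ((ℕ → ℚ) × (ℕ → ℚ) × ℚ)
  | 0 => (fun _ => 0, fun _ => 0, 1)
  | 1 => (fun j => if j = 1 then 1 else 0, fun j => if j = 1 then 1 else 0, 1)
  | (n+2) =>
      let p := F (n+1)
      let th : ℚ := 3 * p.1 (n+1)
      let ph : ℚ := if n = 0 then 4
        else 4 * ∑ j ∈ Finset.Icc 1 (n+1), (th * p.2.1 j - 3 * p.1 j)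
      (fun j => if j = n+2 then ph else 4 * p.1 j,
       fun j => if j = n+2 then 1 else (1 + th) * p.2.1 j,
       ph)

/-- coefficient `a(n,j)` -/
def a (n j : ℕ) : ℚ := (F n).1 j
/-- coefficient `b(n,j)` -/
def b (n j : ℕ) : ℚ := (F n).2.1 j
/-- `φ(n)` -/
def phi (n : ℕ) : ℚ := (F n).2.2
/-- `θ(n) = 3·a(n-1,n-1)` -/
def theta (n : ℕ) : ℚ := 3 * a (n-1) (n-1)

lemma a_succ (n j : ℕ) : a (n+2) j = if j = n+2 then phi (n+2) else 4 * a (n+1) j := by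
  simp only [a, phi, F]

lemma b_succ (n j : ℕ) : b (n+2) j = if j = n+2 then 1 else (1 + 3 * a (n+1) (n+1)) * b (n+1) j := by
  simp only [a, b, F]

lemma phi_succ (n : ℕ) (h : n ≠ 0) :
    phi (n+2) = 4 * ∑ j ∈ Finset.Icc 1 (n+1), (3 * a (n+1) (n+1) * b (n+1) j - 3 * a (n+1) j) := by
  simp only [a, b, phi, F, if_neg h]

lemma a_diag (n : ℕ) (h : 1 ≤ n) : a n n = phi n := by
  match n, h with
  | 1, _ => simp [a, phi, F]
  | (n+2), _ => rw [a_succ, if_pos rfl]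

def S (n : ℕ) : ℚ := ∑ j ∈ Finset.Icc 1 n, b n j
def T (n : ℕ) : ℚ := ∑ j ∈ Finset.Icc 1 n, a n j

lemma S_succ (n : ℕ) : S (n+2) = 1 + (1 + 3 * phi (n+1)) * S (n+1) := by
  rw [S, Finset.sum_Icc_succ_top (by omega), b_succ, if_pos rfl]
  rw [Finset.sum_congr rfl (fun j hj => by
    rw [b_succ, if_neg (by simp at hj; omega), a_diag _ (by omega)])]
  rw [S, ← Finset.mul_sum]; ring

lemma T_succ (n : ℕ) : T (n+2) = phi (n+2) + 4 * T (n+1) := by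
  rw [T, Finset.sum_Icc_succ_top (by omega), a_succ, if_pos rfl]
  rw [Finset.sum_congr rfl (fun j hj => by
    rw [a_succ, if_neg (by simp at hj; omega)])]
  rw [T, ← Finset.mul_sum]; ring

lemma phi_step (n : ℕ) (h : n ≠ 0) :
    phi (n+2) = 12 * (phi (n+1) * S (n+1) - T (n+1)) := by
  rw [phi_succ n h, a_diag _ (by omega), Finset.sum_sub_distrib]
  rw [S, T]
  simp only [mul_assoc, ← Finset.mul_sum]
  ring

lemma key : ∀ n, 2 ≤ n →
    0 ≤ S n ∧ 0 ≤ T n ∧ 4 ≤ phi n ∧ phi n ^ 2 / 4 ≤ phi n * S n - T n := by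
  intro n hn
  induction n, hn using Nat.le_induction with
  | base =>
    have hS : S 2 = 5 := by
      rw [S]; norm_num [Finset.sum_Icc_succ_top, b, F]
    have hT : T 2 = 8 := by
      rw [T]; norm_num [Finset.sum_Icc_succ_top, a, F]
    have hP : phi 2 = 4 := by norm_num [phi, F]
    rw [hS, hT, hP]; norm_num
  | succ n hn ih =>
    obtain ⟨m, rfl⟩ : ∃ m, n = m + 1 := ⟨n - 1, by omega⟩
    obtain ⟨hS, hT, hP, hK⟩ := ih
    have hstep : phi (m+2) = 12 * (phi (m+1) * S (m+1) - T (m+1)) :=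
      phi_step m (by omega)
    have hP2 : 4 ≤ phi (m+2) := by
      rw [hstep]; nlinarith
    refine ⟨?_, ?_, hP2, ?_⟩
    · rw [S_succ]; nlinarith
    · rw [T_succ]; nlinarith
    · rw [S_succ, T_succ]
      have : phi (m+2) * (1 + (1 + 3 * phi (m+1)) * S (m+1))
          - (phi (m+2) + 4 * T (m+1))
          = phi (m+2) * (1 + 3 * phi (m+1)) * S (m+1) - 4 * T (m+1) := by ring
      rw [this, hstep]
      nlinarith [mul_nonneg hS hT, sq_nonneg (phi (m+1)), mul_nonneg hS (sq_nonneg (phi (m+1)))]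

lemma phi_sq (n : ℕ) (h : 2 ≤ n) : 3 * phi n ^ 2 ≤ phi (n+1) := by
  obtain ⟨m, rfl⟩ : ∃ m, n = m + 1 := ⟨n - 1, by omega⟩
  obtain ⟨_, _, _, hK⟩ := key (m+1) h
  rw [phi_step m (by omega)]
  nlinarith

theorem phi_lower_bound (n : ℕ) (hn : 3 ≤ n) :
    (1/3 : ℚ) * 2 ^ (2 ^ n) ≤ phi n := by
  induction n, hn using Nat.le_induction with
  | base =>
    have : phi 3 = 144 := by norm_num [phi, F, Finset.sum_Icc_succ_top, a, b]
    rw [this]; norm_num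
  | succ n hn ih =>
    have h1 := phi_sq n (by omega)
    have h2 : (1/3 : ℚ) * 2 ^ (2 ^ (n+1)) = 3 * ((1/3 : ℚ) * 2 ^ (2 ^ n)) ^ 2 := by
      rw [pow_succ, pow_mul]; norm_num; ring
    have hpos : (0:ℚ) ≤ (1/3 : ℚ) * 2 ^ (2 ^ n) := by positivity
    rw [h2]
    calc 3 * ((1/3 : ℚ) * 2 ^ (2 ^ n)) ^ 2 ≤ 3 * phi n ^ 2 := by nlinarith
    _ ≤ phi (n+1) := h1
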